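/- Let d = 2k be even and n > d. Then 2^d (n-d) d! · σ_{d,n} = Σ_{I ⊆ [n], |I| ≤ k} (-1)^{|I|} C(n-k-|I|-1, k-|I|) (n-2|I|) (δ(I,1)x_1 + ⋯ + δ(I,n)x_n)^d, as a polynomial identity over ℂ. -/

import Mathlib

namespace EsymmAux

open Finset PowerSeries

lemma natCast_eq_C (q : ℕ) : ((q : ℤ⟦X⟧)) = PowerSeries.C (q : ℤ) := by
  simp [map_natCast]

lemma coeff_one_add_X_pow (m s : ℕ) :
    coeff s ((1 + X) ^ m) = (m.choose s : ℤ) := by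
  rw [add_comm (1 : PowerSeries ℤ) X, add_pow, map_sum]
  simp only [one_pow, mul_one, natCast_eq_C, coeff_mul_C, coeff_X_pow]
  rw [Finset.sum_eq_single s]
  · simp
  · intro b _ hb
    simp [Ne.symm hb]
  · intro h
    rw [Finset.mem_range, not_lt] at h
    simp [Nat.choose_eq_zero_of_lt (by omega : m < s)]

lemma coeff_one_sub_X_pow (a s : ℕ) :
    coeff s ((1 - X) ^ a) = (-1 : ℤ) ^ s * (a.choose s : ℤ) := by
  have h : ((1 - X : ℤ⟦X⟧)) ^ a = ∑ x ∈ Finset.range (a + 1),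
      PowerSeries.C ((-1 : ℤ) ^ x * (a.choose x : ℤ)) * X ^ x := by
    rw [sub_eq_add_neg, add_comm, add_pow]
    refine Finset.sum_congr rfl fun x _ => ?_
    rw [neg_pow, one_pow, mul_one, natCast_eq_C]
    simp only [map_mul, map_pow, map_neg, map_one]
    ring
  rw [h, map_sum]
  simp only [coeff_C_mul, coeff_X_pow]
  rw [Finset.sum_eq_single s]
  · simp
  · intro b _ hb
    simp [Ne.symm hb]
  · intro h
    rw [Finset.mem_range, not_lt] at h
    simp [Nat.choose_eq_zero_of_lt (by omega : a < s)]


noncomputable def J (N : ℕ) : PowerSeries ℤ :=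
  PowerSeries.mk fun v => (-1 : ℤ) ^ v * ((N + v).choose v)

lemma coeff_J (N v : ℕ) : coeff v (J N) = (-1 : ℤ) ^ v * ((N + v).choose v) :=
  coeff_mk _ _

lemma one_add_X_mul_J (N : ℕ) : (1 + X) * J (N + 1) = J N := by
  ext u
  rw [add_mul, one_mul, map_add]
  cases u with
  | zero => simp [coeff_J]
  | succ v =>
    rw [coeff_succ_X_mul, coeff_J, coeff_J, coeff_J]
    have h1 : N + 1 + (v + 1) = (N + v + 1) + 1 := by ring
    have h2 : N + 1 + v = N + v + 1 := by ring
    have h3 : N + (v + 1) = N + v + 1 := by ring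
    rw [h1, h2, h3, Nat.choose_succ_succ (N + v + 1) v]
    push_cast
    ring

lemma one_add_X_pow_mul_J (N : ℕ) : (1 + X) ^ (N + 1) * J N = 1 := by
  induction N with
  | zero =>
    ext u
    rw [pow_one, add_mul, one_mul, map_add]
    cases u with
    | zero => simp [coeff_J]
    | succ v =>
      rw [coeff_succ_X_mul, coeff_J, coeff_J]
      simp [pow_succ, coeff_one]
  | succ N ih =>
    rw [pow_succ, mul_assoc, one_add_X_mul_J N, ih]


lemma coeff_J_zero (v : ℕ) : coeff v (J 0) = (-1 : ℤ) ^ v := by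
  rw [coeff_J]; simp

lemma one_add_X_ne_zero : (1 + X : PowerSeries ℤ) ≠ 0 := fun h => by
  simpa using congrArg (coeff 0) h

lemma one_add_X_pow_mul_J_succ (N : ℕ) : (1 + X) ^ N * J N = J 0 := by
  have h1 : (1 + X) * ((1 + X) ^ N * J N) = (1 + X) * J 0 := by
    rw [← mul_assoc, ← pow_succ']
    rw [one_add_X_pow_mul_J N]
    rw [show ((1 + X : PowerSeries ℤ)) * J 0 = (1 + X) ^ (0 + 1) * J 0 by ring,
      one_add_X_pow_mul_J 0]
  exact mul_left_cancel₀ one_add_X_ne_zero h1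

lemma JG_lt (n k j : ℕ) (hn : 2 * k < n) (hj : j < k) :
    J (n - 2 * k) * ((1 - X) ^ (2 * j) * (1 + X) ^ (n - 2 * j)) =
      (1 - X) ^ (2 * j) * (1 + X) ^ (2 * k - 2 * j - 1) := by
  have hsplit : (1 + X : PowerSeries ℤ) ^ (n - 2 * j) =
      (1 + X) ^ (2 * k - 2 * j - 1) * (1 + X) ^ (n - 2 * k + 1) := by
    rw [← pow_add]; congr 1; omega
  rw [hsplit]
  have : n - 2 * k + 1 = (n - 2 * k) + 1 := rfl
  calc J (n - 2 * k) * ((1 - X) ^ (2 * j) * ((1 + X) ^ (2 * k - 2 * j - 1) * (1 + X) ^ (n - 2 * k + 1)))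
      = ((1 - X) ^ (2 * j) * (1 + X) ^ (2 * k - 2 * j - 1)) * ((1 + X) ^ ((n - 2 * k) + 1) * J (n - 2 * k)) := by ring
    _ = (1 - X) ^ (2 * j) * (1 + X) ^ (2 * k - 2 * j - 1) := by
        rw [one_add_X_pow_mul_J]; ring

lemma JG_eq (n k : ℕ) (hn : 2 * k < n) :
    J (n - 2 * k) * ((1 - X) ^ (2 * k) * (1 + X) ^ (n - 2 * k)) =
      (1 - X) ^ (2 * k) * J 0 := by
  calc J (n - 2 * k) * ((1 - X) ^ (2 * k) * (1 + X) ^ (n - 2 * k))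
      = (1 - X) ^ (2 * k) * ((1 + X) ^ (n - 2 * k) * J (n - 2 * k)) := by ring
    _ = (1 - X) ^ (2 * k) * J 0 := by rw [one_add_X_pow_mul_J_succ]

lemma coeff_mul_pow (a b s : ℕ) :
    coeff s ((1 - X) ^ a * (1 + X) ^ b) =
      ∑ i ∈ Finset.range (s + 1), (-1 : ℤ) ^ i * (a.choose i : ℤ) * ((b.choose (s - i) : ℤ)) := by
  rw [coeff_mul, Finset.Nat.sum_antidiagonal_eq_sum_range_succ_mk]
  refine Finset.sum_congr rfl fun i _ => ?_
  rw [coeff_one_sub_X_pow, coeff_one_add_X_pow]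

lemma coeff_center (a b k : ℕ) (hab : a + b = 2 * k) (ha : Odd a) :
    coeff (R := ℤ) k ((1 - X) ^ a * (1 + X) ^ b) = 0 := by
  rw [coeff_mul_pow]
  refine Finset.sum_involution
    (fun i _ => if a ≤ k + i ∧ i ≤ a then a - i else i) ?_ ?_ ?_ ?_
  · -- f i + f (g i) = 0
    intro i hi
    rw [Finset.mem_range] at hi
    by_cases hbr : a ≤ k + i ∧ i ≤ a
    · simp only [hbr, if_true, and_self]
      have h1 : a.choose (a - i) = a.choose i := Nat.choose_symm hbr.2
      have h2 : b.choose (k - (a - i)) = b.choose (k - i) := by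
        have hki : k - i ≤ b := by omega
        have : k - (a - i) = b - (k - i) := by omega
        rw [this, Nat.choose_symm hki]
      have h3 : (-1 : ℤ) ^ (a - i) = -(-1 : ℤ) ^ i := by
        have heq : (-1 : ℤ) ^ (a - i) * (-1 : ℤ) ^ i = -1 := by
          rw [← pow_add]
          have : a - i + i = a := by omega
          rw [this, ha.neg_one_pow]
        rcases Nat.even_or_odd i with he | ho
        · rw [he.neg_one_pow] at heq ⊢; linarith
        · rw [ho.neg_one_pow] at heq ⊢; linarith
      rw [h1, h2, h3]
      ring
    · simp only [hbr, if_false]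
      have : (a.choose i : ℤ) * (b.choose (k - i) : ℤ) = 0 := by
        rcases not_and_or.mp hbr with h | h
        · have : b.choose (k - i) = 0 := Nat.choose_eq_zero_of_lt (by omega)
          simp [this]
        · have : a.choose i = 0 := Nat.choose_eq_zero_of_lt (by omega)
          simp [this]
      have hz : (-1:ℤ) ^ i * (a.choose i : ℤ) * (b.choose (k - i) : ℤ) = 0 := by
        rw [mul_assoc, this, mul_zero]
      rw [hz]; ring
  · -- f i ≠ 0 → g i ≠ i
    intro i hi hfi
    rw [Finset.mem_range] at hi
    have hbr : a ≤ k + i ∧ i ≤ a := by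
      by_contra hbr
      apply hfi
      rcases not_and_or.mp hbr with h | h
      · have : b.choose (k - i) = 0 := Nat.choose_eq_zero_of_lt (by omega)
        simp [this]
      · have : a.choose i = 0 := Nat.choose_eq_zero_of_lt (by omega)
        simp [this]
    simp only [hbr, if_true, and_self]
    rcases ha with ⟨c, hc⟩
    omega
  · -- g maps into s
    intro i hi
    rw [Finset.mem_range] at hi ⊢
    split <;> omega
  · -- involutive
    intro i hi
    rw [Finset.mem_range] at hi
    by_cases hbr : a ≤ k + i ∧ i ≤ a
    · simp only [hbr, if_true, and_self]
      have hbr2 : a ≤ k + (a - i) ∧ a - i ≤ a := by omega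
      simp only [hbr2, if_true, and_self]
      omega
    · simp only [hbr, if_false, hbr]

lemma coeff_center_J0 (k : ℕ) (J0 : PowerSeries ℤ)
    (hJ : ∀ v, coeff v J0 = (-1 : ℤ) ^ v) :
    coeff k ((1 - X) ^ (2 * k + 1) * J0) = (-1 : ℤ) ^ k * 4 ^ k := by
  rw [coeff_mul, Finset.Nat.sum_antidiagonal_eq_sum_range_succ_mk]
  have : ∀ i ∈ Finset.range (k + 1),
      coeff i ((1 - X) ^ (2 * k + 1)) * coeff (k - i) J0 =
        (-1 : ℤ) ^ k * ((2 * k + 1).choose i : ℤ) := by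
    intro i hi
    rw [Finset.mem_range] at hi
    rw [coeff_one_sub_X_pow, hJ]
    have : (-1 : ℤ) ^ i * (-1 : ℤ) ^ (k - i) = (-1 : ℤ) ^ k := by
      rw [← pow_add]; congr 1; omega
    nlinarith [this]
  rw [Finset.sum_congr rfl this, ← Finset.mul_sum]
  norm_cast
  rw [Nat.sum_range_choose_halfway]

noncomputable def F (N : ℕ) : PowerSeries ℤ := (1 - X) * J N

lemma coeff_F (N u : ℕ) : coeff u (F N) =
    (-1 : ℤ) ^ u * (((N + u).choose u : ℤ) + if u = 0 then 0 else ((N + u - 1).choose (u - 1) : ℤ)) := by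
  rw [F, sub_mul, one_mul, map_sub]
  cases u with
  | zero => simp [coeff_J]
  | succ v =>
    rw [coeff_succ_X_mul, coeff_J, coeff_J]
    have h1 : N + (v + 1) - 1 = N + v := by omega
    have h2 : v + 1 - 1 = v := by omega
    simp only [Nat.succ_ne_zero, if_false, h1, h2]
    ring

lemma c_decomp (n k s : ℕ) (hn : 2 * k < n) (hs : s ≤ k) :
    ((n - 2 * s : ℕ) : ℤ) * (((n - k - s - 1).choose (k - s) : ℤ)) =
      ((n - 2 * k : ℕ) : ℤ) * ((((n - k - s).choose (k - s)) : ℤ) +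
        if k - s = 0 then 0 else (((n - k - s - 1).choose (k - s - 1)) : ℤ)) := by
  rcases Nat.eq_or_lt_of_le hs with rfl | hlt
  · simp only [Nat.sub_self, if_true, add_zero, Nat.choose_zero_right, Nat.cast_one, mul_one]
  · -- s < k
    rw [if_neg (by omega : ¬ (k - s = 0))]
    set t := k - s - 1 with ht
    have hks : k - s = t + 1 := by omega
    set m := n - k - s - 1 with hm
    have hm1 : n - k - s = m + 1 := by omega
    have hq : m - t = n - 2 * k := by omega
    have hts : t + 1 ≤ m := by omega
    rw [hks, hm1]
    have hrec := Nat.choose_succ_right_eq m t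
    have hpas : (m+1).choose (t+1) = m.choose t + m.choose (t+1) := Nat.choose_succ_succ m t
    rw [hpas]
    have hn2s : (n - 2*s : ℕ) = (m + t + 2) := by omega
    have hn2k : (n - 2*k : ℕ) = m - t := by omega
    rw [hn2s, hn2k]
    zify [hts, le_of_lt, show t ≤ m by omega]
    zify [show t ≤ m by omega] at hq hrec ⊢
    nlinarith [hrec]

lemma key (n k a : ℕ) (hn : 2 * k < n) (hak : a ≤ 2 * k) (hae : Even a) :
    ∑ t ∈ Finset.range (a + 1), ∑ u ∈ Finset.range (n - a + 1),
      ((a.choose t : ℤ) * ((n - a).choose u : ℤ) *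
        (if t + u ≤ k then
          (-1 : ℤ) ^ (t + u) * (((n - k - (t + u) - 1).choose (k - (t + u))) : ℤ) *
            ((n - 2 * (t + u) : ℕ) : ℤ) * (-1 : ℤ) ^ t
         else 0)) =
      if a = 2 * k then 4 ^ k * ((n - 2 * k : ℕ) : ℤ) else 0 := by
  classical
  set N := n - 2 * k with hN
  set G : PowerSeries ℤ := (1 - X) ^ a * (1 + X) ^ (n - a) with hG
  set g : ℕ × ℕ → ℤ := fun p =>
    (-1 : ℤ) ^ p.1 * (a.choose p.1 : ℤ) * ((n - a).choose p.2 : ℤ) *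
      ((-1 : ℤ) ^ (p.1 + p.2) * (((n - k - (p.1 + p.2) - 1).choose (k - (p.1 + p.2))) : ℤ) *
        ((n - 2 * (p.1 + p.2) : ℕ) : ℤ)) with hg
  set P : Finset (ℕ × ℕ) := Finset.range (a + 1) ×ˢ Finset.range (n - a + 1) with hP
  set E : Finset (ℕ × ℕ) := Finset.range (k + 1) ×ˢ Finset.range (k + 1) with hE
  -- Step A
  have stepA : ∑ t ∈ Finset.range (a + 1), ∑ u ∈ Finset.range (n - a + 1),
      ((a.choose t : ℤ) * ((n - a).choose u : ℤ) *
        (if t + u ≤ k then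
          (-1 : ℤ) ^ (t + u) * (((n - k - (t + u) - 1).choose (k - (t + u))) : ℤ) *
            ((n - 2 * (t + u) : ℕ) : ℤ) * (-1 : ℤ) ^ t
         else 0)) = ∑ p ∈ P.filter (fun p => p.1 + p.2 ≤ k), g p := by
    rw [Finset.sum_filter, ← Finset.sum_product']
    refine Finset.sum_congr rfl fun p _ => ?_
    by_cases hc : p.1 + p.2 ≤ k
    · rw [if_pos hc, if_pos hc, hg]; ring
    · rw [if_neg hc, if_neg hc]; ring
  rw [stepA]
  -- Step B
  have hsub1 : P.filter (fun p => p.1 + p.2 ≤ k) ⊆ (P ∪ E).filter (fun p => p.1 + p.2 ≤ k) :=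
    Finset.filter_subset_filter _ Finset.subset_union_left
  have hsub2 : E.filter (fun p => p.1 + p.2 ≤ k) ⊆ (P ∪ E).filter (fun p => p.1 + p.2 ≤ k) :=
    Finset.filter_subset_filter _ Finset.subset_union_right
  have stepB : ∑ p ∈ P.filter (fun p => p.1 + p.2 ≤ k), g p
      = ∑ p ∈ E.filter (fun p => p.1 + p.2 ≤ k), g p := by
    rw [Finset.sum_subset hsub1 ?z1, ← Finset.sum_subset hsub2 ?z2]
    case z1 =>
      intro p hp hnp
      rw [Finset.mem_filter] at hp
      have hcond := hp.2
      have hnP : p ∉ P := fun h => hnp (Finset.mem_filter.mpr ⟨h, hcond⟩)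
      rw [hP, Finset.mem_product, Finset.mem_range, Finset.mem_range] at hnP
      rw [hg]
      rcases not_and_or.mp hnP with h | h
      · have : a.choose p.1 = 0 := Nat.choose_eq_zero_of_lt (by omega)
        simp [this]
      · have : (n - a).choose p.2 = 0 := Nat.choose_eq_zero_of_lt (by omega)
        simp [this]
    case z2 =>
      intro p hp hnp
      exfalso
      rw [Finset.mem_filter] at hp
      apply hnp
      rw [Finset.mem_filter, hE, Finset.mem_product, Finset.mem_range, Finset.mem_range]
      exact ⟨⟨by omega, by omega⟩, hp.2⟩
  rw [stepB]
  -- Step C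
  have stepC : E.filter (fun p => p.1 + p.2 ≤ k)
      = (Finset.range (k + 1)).biUnion (fun s => Finset.HasAntidiagonal.antidiagonal s) := by
    ext p
    simp only [Finset.mem_filter, hE, Finset.mem_product, Finset.mem_range, Finset.mem_biUnion,
      Finset.HasAntidiagonal.mem_antidiagonal]
    constructor
    · rintro ⟨⟨h1, h2⟩, h3⟩; exact ⟨p.1 + p.2, by omega, rfl⟩
    · rintro ⟨s, hs, rfl⟩; omega
  rw [stepC, Finset.sum_biUnion ?disj]
  case disj =>
    intro s hs t ht hst
    simp only [Finset.disjoint_left]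
    intro p hp hq
    rw [Finset.HasAntidiagonal.mem_antidiagonal] at hp hq
    exact hst (by omega)
  -- Step D
  have stepD : ∀ s ∈ Finset.range (k + 1), ∑ p ∈ Finset.HasAntidiagonal.antidiagonal s, g p
      = (-1 : ℤ) ^ s * ((((n - k - s - 1).choose (k - s)) : ℤ) * ((n - 2 * s : ℕ) : ℤ))
          * coeff s G := by
    intro s _
    rw [hG, coeff_mul_pow, Finset.Nat.sum_antidiagonal_eq_sum_range_succ_mk, Finset.mul_sum]
    refine Finset.sum_congr rfl fun i hi => ?_
    rw [Finset.mem_range] at hi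
    have h1 : i + (s - i) = s := by omega
    rw [hg]
    simp only [h1]
    ring
  rw [Finset.sum_congr rfl stepD]
  -- Step E/F: rewrite the coefficient factor via c_decomp and coeff_F
  have stepEF : ∀ s ∈ Finset.range (k + 1),
      (-1 : ℤ) ^ s * ((((n - k - s - 1).choose (k - s)) : ℤ) * ((n - 2 * s : ℕ) : ℤ)) * coeff s G
      = ((n - 2 * k : ℕ) : ℤ) * (-1 : ℤ) ^ k * (coeff (k - s) (F N) * coeff s G) := by
    intro s hs
    rw [Finset.mem_range] at hs
    have hs' : s ≤ k := by omega
    have hd := c_decomp n k s hn hs'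
    have hcF : coeff (k - s) (F N) = (-1 : ℤ) ^ (k - s) *
        ((((n - k - s).choose (k - s)) : ℤ) +
          if k - s = 0 then 0 else (((n - k - s - 1).choose (k - s - 1)) : ℤ)) := by
      rw [coeff_F]
      have e1 : N + (k - s) = n - k - s := by omega
      rw [e1]
    have hsign : (-1 : ℤ) ^ s = (-1 : ℤ) ^ k * (-1 : ℤ) ^ (k - s) := by
      rw [← pow_add]
      have : k + (k - s) = s + 2 * (k - s) := by omega
      rw [this, pow_add, pow_mul, neg_one_sq, one_pow, mul_one]
    rw [hcF, hsign]
    calc (-1:ℤ)^k * (-1:ℤ)^(k-s) * (↑((n-k-s-1).choose (k-s)) * ↑(n - 2*s)) * coeff s G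
        = (-1:ℤ)^k * (-1:ℤ)^(k-s) * ((↑(n - 2*s) : ℤ) * ↑((n-k-s-1).choose (k-s))) * coeff s G := by ring
      _ = (-1:ℤ)^k * (-1:ℤ)^(k-s) * (((n - 2*k : ℕ) : ℤ) * ((((n-k-s).choose (k-s)) : ℤ) +
            if k - s = 0 then 0 else (((n-k-s-1).choose (k-s-1)) : ℤ))) * coeff s G := by rw [hd]
      _ = ((n - 2*k : ℕ) : ℤ) * (-1:ℤ)^k * (((-1:ℤ)^(k-s) * ((((n-k-s).choose (k-s)) : ℤ) +
            if k - s = 0 then 0 else (((n-k-s-1).choose (k-s-1)) : ℤ))) * coeff s G) := by ring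
  rw [Finset.sum_congr rfl stepEF, ← Finset.mul_sum]
  -- Step G: the sum is coeff k (F N * G)
  have stepG : ∑ s ∈ Finset.range (k + 1), coeff (k - s) (F N) * coeff s G
      = coeff k (F N * G) := by
    rw [coeff_mul, Finset.Nat.sum_antidiagonal_eq_sum_range_succ_mk]
    rw [← Finset.sum_range_reflect]
    refine Finset.sum_congr rfl fun j hj => ?_
    rw [Finset.mem_range] at hj
    have e1 : k + 1 - 1 - j = k - j := by omega
    have e2 : k - (k - j) = j := by omega
    rw [e1, e2]
  rw [stepG]
  -- Step H
  rcases Nat.lt_or_ge a (2 * k) with hlt | hge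
  · obtain ⟨j, hj⟩ := hae
    have hjk : j < k := by omega
    have ha2 : a = 2 * j := by omega
    have hFG : F N * G = (1 - X) ^ (2 * j + 1) * (1 + X) ^ (2 * k - 2 * j - 1) := by
      rw [hG, ha2, F, hN, mul_assoc, JG_lt n k j hn hjk, ← mul_assoc, ← pow_succ']
    rw [hFG, coeff_center (2 * j + 1) (2 * k - 2 * j - 1) k (by omega) ⟨j, by omega⟩]
    rw [if_neg (by omega : ¬ a = 2 * k)]
    ring
  · have ha2 : a = 2 * k := by omega
    have hFG : F N * G = (1 - X) ^ (2 * k + 1) * J 0 := by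
      rw [hG, ha2, F, hN, mul_assoc, JG_eq n k hn, ← mul_assoc, ← pow_succ']
    rw [hFG, coeff_center_J0 k (J 0) coeff_J_zero, if_pos ha2]
    have : (-1 : ℤ) ^ k * (-1 : ℤ) ^ k = 1 := by
      rw [← pow_add, Even.neg_one_pow ⟨k, rfl⟩]
    calc ((n - 2*k : ℕ) : ℤ) * (-1:ℤ)^k * ((-1:ℤ)^k * 4^k)
        = ((n - 2*k : ℕ) : ℤ) * 4^k * ((-1:ℤ)^k * (-1:ℤ)^k) := by ring
      _ = 4 ^ k * ((n - 2*k : ℕ) : ℤ) := by rw [this]; ring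

lemma sum_powerset_card {ι : Type*} [DecidableEq ι] (B : Finset ι) (φ : ℕ → ℤ) :
    ∑ T ∈ B.powerset, φ T.card = ∑ t ∈ Finset.range (B.card + 1), (B.card.choose t : ℤ) * φ t := by
  rw [Finset.powerset_card_biUnion, Finset.sum_biUnion ?disj]
  · refine Finset.sum_congr rfl fun t _ => ?_
    have h1 : ∀ T ∈ Finset.powersetCard t B, φ T.card = φ t := fun T hT => by
      rw [(Finset.mem_powersetCard.mp hT).2]
    rw [Finset.sum_congr rfl h1, Finset.sum_const, Finset.card_powersetCard, nsmul_eq_mul]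
  case disj =>
    intro s hs t ht hst
    simp only [Finset.disjoint_left]
    intro T hT hT'
    rw [Finset.mem_powersetCard] at hT hT'
    exact hst (by rw [← hT.2, ← hT'.2])

lemma W_eval (n k : ℕ) (hn : 2 * k < n) (m : Fin n → ℕ) (hm : ∑ i, m i = 2 * k) :
    ∑ I ∈ (Finset.univ : Finset (Fin n)).powerset.filter (fun I => I.card ≤ k),
      (-1 : ℤ) ^ I.card * (((n - k - I.card - 1).choose (k - I.card)) : ℤ) *
        ((n - 2 * I.card : ℕ) : ℤ) * (-1 : ℤ) ^ (∑ i ∈ I, m i)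
    = if (∀ i, m i ≤ 1) then 4 ^ k * ((n - 2 * k : ℕ) : ℤ) else 0 := by
  classical
  set A : Finset (Fin n) := Finset.univ.filter (fun i => Odd (m i)) with hA
  set a := A.card with ha
  -- sign only depends on |I ∩ A|
  have hsign : ∀ I : Finset (Fin n), (-1 : ℤ) ^ (∑ i ∈ I, m i) = (-1 : ℤ) ^ (I ∩ A).card := by
    intro I
    calc (-1 : ℤ) ^ (∑ i ∈ I, m i) = ∏ i ∈ I, (-1 : ℤ) ^ m i :=
          (Finset.prod_pow_eq_pow_sum I m (-1)).symm
      _ = ∏ i ∈ I, (if i ∈ A then (-1 : ℤ) else 1) := by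
          refine Finset.prod_congr rfl fun i _ => ?_
          by_cases h : Odd (m i)
          · rw [h.neg_one_pow, if_pos (by simp [hA, h])]
          · rw [(Nat.not_odd_iff_even.mp h).neg_one_pow, if_neg (by simp [hA, h])]
      _ = ∏ _i ∈ I ∩ A, (-1 : ℤ) := Finset.prod_ite_mem I A _
      _ = (-1 : ℤ) ^ (I ∩ A).card := Finset.prod_const _
  -- facts about a
  have hae : Even a := by
    have := (Finset.even_sum_iff_even_card_odd (s := Finset.univ) m).mp (by rw [hm]; exact ⟨k, by ring⟩)
    exact this
  have hA1 : ∀ i ∈ A, 1 ≤ m i := by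
    intro i hi
    rw [hA, Finset.mem_filter] at hi
    rcases hi.2 with ⟨c, hc⟩
    omega
  have hsumA : a ≤ ∑ i ∈ A, m i := by
    have := Finset.card_nsmul_le_sum A m 1 hA1
    simpa using this
  have hsplit : ∑ i ∈ Finset.univ \ A, m i + ∑ i ∈ A, m i = 2 * k := by
    rw [Finset.sum_sdiff (Finset.subset_univ A), hm]
  have hak : a ≤ 2 * k := by omega
  -- the key iff
  have hiff : (∀ i, m i ≤ 1) ↔ a = 2 * k := by
    constructor
    · intro hsq
      have h1 : ∀ i, m i = if m i = 1 then 1 else 0 := fun i => by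
        have := hsq i
        by_cases h : m i = 1 <;> simp [h] <;> omega
      have h2 : (∑ i, m i) = (Finset.univ.filter (fun i => m i = 1)).card := by
        rw [Finset.sum_congr rfl (fun i _ => h1 i), Finset.sum_boole]
        simp
      have h3 : Finset.univ.filter (fun i : Fin n => m i = 1) = A := by
        refine Finset.filter_congr fun i _ => ?_
        constructor
        · intro h; rw [h]; exact ⟨0, by ring⟩
        · intro h; rcases h with ⟨c, hc⟩; have := hsq i; omega
      rw [hm] at h2
      rw [h3] at h2
      omega
    · intro haeq
      have h0 : ∑ i ∈ Finset.univ \ A, m i = 0 := by omega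
      have h1 : ∑ i ∈ A, m i = 2 * k := by omega
      have h2 : ∀ i ∈ A, m i = 1 := by
        have heq : ∑ i ∈ A, (1 : ℕ) = ∑ i ∈ A, m i := by
          rw [Finset.sum_const, smul_eq_mul, mul_one, h1, ← haeq, ha]
        intro i hi
        exact ((Finset.sum_eq_sum_iff_of_le hA1).mp heq i hi).symm
      intro i
      by_cases hi : i ∈ A
      · rw [h2 i hi]
      · have := Finset.sum_eq_zero_iff.mp h0 i (Finset.mem_sdiff.mpr ⟨Finset.mem_univ i, hi⟩)
        omega
  -- rewrite signs
  rw [Finset.sum_congr rfl (fun I _ => by rw [hsign I])]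
  -- bijection onto pairs
  have hcard_sdiff : (Finset.univ \ A).card = n - a := by
    rw [Finset.card_sdiff_of_subset (Finset.subset_univ A), Finset.card_univ, Fintype.card_fin]
  have hbij : ∑ I ∈ (Finset.univ : Finset (Fin n)).powerset.filter (fun I => I.card ≤ k),
        (-1 : ℤ) ^ I.card * (((n - k - I.card - 1).choose (k - I.card)) : ℤ) *
          ((n - 2 * I.card : ℕ) : ℤ) * (-1 : ℤ) ^ (I ∩ A).card
      = ∑ p ∈ (A.powerset ×ˢ (Finset.univ \ A).powerset).filter
          (fun p => p.1.card + p.2.card ≤ k),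
        (-1 : ℤ) ^ (p.1.card + p.2.card) *
          (((n - k - (p.1.card + p.2.card) - 1).choose (k - (p.1.card + p.2.card))) : ℤ) *
          ((n - 2 * (p.1.card + p.2.card) : ℕ) : ℤ) * (-1 : ℤ) ^ p.1.card := by
    refine Finset.sum_nbij' (fun I => (I ∩ A, I \ A)) (fun p => p.1 ∪ p.2) ?_ ?_ ?_ ?_ ?_
    · intro I hI
      rw [Finset.mem_filter] at hI
      rw [Finset.mem_filter, Finset.mem_product]
      refine ⟨⟨Finset.mem_powerset.mpr Finset.inter_subset_right, Finset.mem_powerset.mpr ?_⟩, ?_⟩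
      · intro i hi
        rw [Finset.mem_sdiff] at hi ⊢
        exact ⟨Finset.mem_univ i, hi.2⟩
      · simp only
        rw [Finset.card_inter_add_card_sdiff]
        exact hI.2
    · intro p hp
      rw [Finset.mem_filter, Finset.mem_product] at hp
      rw [Finset.mem_filter]
      have hdisj : Disjoint p.1 p.2 := by
        rw [Finset.disjoint_left]
        intro i hi1 hi2
        have h1 : i ∈ A := Finset.mem_powerset.mp hp.1.1 hi1
        have h2 := Finset.mem_powerset.mp hp.1.2 hi2
        rw [Finset.mem_sdiff] at h2
        exact h2.2 h1
      constructor
      · exact Finset.mem_powerset.mpr (Finset.subset_univ _)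
      · rw [Finset.card_union_of_disjoint hdisj]; exact hp.2
    · intro I _
      simp only
      ext i
      simp only [Finset.mem_union, Finset.mem_inter, Finset.mem_sdiff]
      tauto
    · intro p hp
      rw [Finset.mem_filter, Finset.mem_product] at hp
      have hT := Finset.mem_powerset.mp hp.1.1
      have hU := Finset.mem_powerset.mp hp.1.2
      have e1 : (p.1 ∪ p.2) ∩ A = p.1 := by
        ext i
        simp only [Finset.mem_inter, Finset.mem_union]
        constructor
        · rintro ⟨h1 | h1, h2⟩
          · exact h1
          · exact absurd h2 ((Finset.mem_sdiff.mp (hU h1)).2)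
        · intro h; exact ⟨Or.inl h, hT h⟩
      have e2 : (p.1 ∪ p.2) \ A = p.2 := by
        ext i
        simp only [Finset.mem_sdiff, Finset.mem_union]
        constructor
        · rintro ⟨h1 | h1, h2⟩
          · exact absurd (hT h1) h2
          · exact h1
        · intro h
          exact ⟨Or.inr h, (Finset.mem_sdiff.mp (hU h)).2⟩
      rw [e1, e2]
    · intro I hI
      have hc : I.card = (I ∩ A).card + (I \ A).card := (Finset.card_inter_add_card_sdiff I A).symm
      rw [hc]
  rw [hbij, Finset.sum_filter, Finset.sum_product]
  dsimp only
  -- powerset sums to range sums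
  rw [sum_powerset_card A (fun t => ∑ U ∈ (Finset.univ \ A).powerset,
    if t + U.card ≤ k then
      (-1 : ℤ) ^ (t + U.card) * (((n - k - (t + U.card) - 1).choose (k - (t + U.card))) : ℤ) *
        ((n - 2 * (t + U.card) : ℕ) : ℤ) * (-1 : ℤ) ^ t
    else 0)]
  have hinner : ∀ t ∈ Finset.range (A.card + 1),
      (A.card.choose t : ℤ) * (∑ U ∈ (Finset.univ \ A).powerset,
        if t + U.card ≤ k then
          (-1 : ℤ) ^ (t + U.card) * (((n - k - (t + U.card) - 1).choose (k - (t + U.card))) : ℤ) *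
            ((n - 2 * (t + U.card) : ℕ) : ℤ) * (-1 : ℤ) ^ t
        else 0)
      = ∑ u ∈ Finset.range ((n - a) + 1), ((a.choose t : ℤ) * (((n - a).choose u) : ℤ) *
          (if t + u ≤ k then
            (-1 : ℤ) ^ (t + u) * (((n - k - (t + u) - 1).choose (k - (t + u))) : ℤ) *
              ((n - 2 * (t + u) : ℕ) : ℤ) * (-1 : ℤ) ^ t
           else 0)) := by
    intro t _
    rw [sum_powerset_card (Finset.univ \ A)
      (fun u => if t + u ≤ k then
          (-1 : ℤ) ^ (t + u) * (((n - k - (t + u) - 1).choose (k - (t + u))) : ℤ) *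
            ((n - 2 * (t + u) : ℕ) : ℤ) * (-1 : ℤ) ^ t
        else 0), hcard_sdiff, Finset.mul_sum]
    refine Finset.sum_congr rfl fun u _ => ?_
    rw [← ha]
    ring
  rw [Finset.sum_congr rfl hinner, ← ha, key n k a hn hak hae]
  rcases Classical.em (∀ i, m i ≤ 1) with hc | hc
  · rw [if_pos hc, if_pos (hiff.mp hc)]
  · rw [if_neg hc, if_neg (fun h => hc (hiff.mpr h))]


end EsymmAux

open EsymmAux

open MvPolynomial Finset

/-- Power sum decomposition of the elementary symmetric polynomial of even degree `d = 2k`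
in `n > d` variables:
`2^d (n-d) d! σ_{d,n} = ∑_{|I| ≤ k} (-1)^{|I|} C(n-k-|I|-1, k-|I|) (n-2|I|) (δ(I,1)x_1+⋯)^d`. -/
theorem esymm_even_decomposition (d k n : ℕ) (hd : d = 2 * k) (hn : d < n) :
    ((2 ^ d * (n - d) * d.factorial : ℕ) : MvPolynomial (Fin n) ℂ) * esymm (Fin n) ℂ d =
      ∑ I ∈ (Finset.univ : Finset (Fin n)).powerset.filter (fun I => I.card ≤ k),
        (-1 : MvPolynomial (Fin n) ℂ) ^ I.card *
          ((n - k - I.card - 1).choose (k - I.card) : MvPolynomial (Fin n) ℂ) *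
          ((n - 2 * I.card : ℕ) : MvPolynomial (Fin n) ℂ) *
          (∑ i, (if i ∈ I then (-1 : MvPolynomial (Fin n) ℂ) else 1) * X i) ^ d := by
  classical
  subst hd
  set R := MvPolynomial (Fin n) ℂ
  set Φ : Finset (Finset (Fin n)) :=
    (Finset.univ : Finset (Fin n)).powerset.filter (fun I => I.card ≤ k) with hΦ
  -- Step 1: expand each power
  have expand : ∀ I : Finset (Fin n),
      (∑ i, (if i ∈ I then (-1 : R) else 1) * X i) ^ (2 * k)
      = ∑ m ∈ piAntidiag (Finset.univ : Finset (Fin n)) (2 * k),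
          (Nat.multinomial Finset.univ m : R) * (-1 : R) ^ (∑ i ∈ I, m i) * ∏ i, X i ^ m i := by
    intro I
    rw [Finset.sum_pow_eq_sum_piAntidiag]
    refine Finset.sum_congr rfl fun m hm => ?_
    have h1 : ∏ i, ((if i ∈ I then (-1 : R) else 1) * X i) ^ m i
        = (∏ i, (if i ∈ I then (-1 : R) else 1) ^ m i) * ∏ i, X i ^ m i := by
      rw [← Finset.prod_mul_distrib]
      exact Finset.prod_congr rfl fun i _ => mul_pow _ _ _
    have h2 : (∏ i, (if i ∈ I then (-1 : R) else 1) ^ m i) = (-1 : R) ^ (∑ i ∈ I, m i) := by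
      have : ∀ i : Fin n, (if i ∈ I then (-1 : R) else 1) ^ m i
          = if i ∈ I then (-1 : R) ^ m i else 1 := fun i => by split <;> simp
      rw [Finset.prod_congr rfl fun i _ => this i, Finset.prod_ite_mem, Finset.univ_inter,
        Finset.prod_pow_eq_pow_sum]
    rw [h1, h2, mul_assoc]
  -- Step 2: swap sums
  have step2 : ∑ I ∈ Φ,
        (-1 : R) ^ I.card * ((n - k - I.card - 1).choose (k - I.card) : R) *
          ((n - 2 * I.card : ℕ) : R) *
          (∑ i, (if i ∈ I then (-1 : R) else 1) * X i) ^ (2 * k)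
      = ∑ m ∈ piAntidiag (Finset.univ : Finset (Fin n)) (2 * k),
          (Nat.multinomial Finset.univ m : R) * (∏ i, X i ^ m i) *
            ((∑ I ∈ Φ, (-1 : ℤ) ^ I.card * (((n - k - I.card - 1).choose (k - I.card)) : ℤ) *
              ((n - 2 * I.card : ℕ) : ℤ) * (-1 : ℤ) ^ (∑ i ∈ I, m i) : ℤ) : R) := by
    rw [Finset.sum_congr rfl fun I _ => by rw [expand I]]
    rw [Finset.sum_congr rfl fun I (_ : I ∈ Φ) => Finset.mul_sum _ _ _]
    rw [Finset.sum_comm]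
    refine Finset.sum_congr rfl fun m _ => ?_
    push_cast
    rw [Finset.mul_sum]
    refine Finset.sum_congr rfl fun I _ => ?_
    ring
  rw [step2]
  -- Step 3: evaluate the inner scalar sum
  have step3 : ∀ m ∈ piAntidiag (Finset.univ : Finset (Fin n)) (2 * k),
      (Nat.multinomial Finset.univ m : R) * (∏ i, X i ^ m i) *
        ((∑ I ∈ Φ, (-1 : ℤ) ^ I.card * (((n - k - I.card - 1).choose (k - I.card)) : ℤ) *
          ((n - 2 * I.card : ℕ) : ℤ) * (-1 : ℤ) ^ (∑ i ∈ I, m i) : ℤ) : R)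
      = if (∀ i, m i ≤ 1) then
          (Nat.multinomial Finset.univ m : R) * ((4 ^ k * (n - 2 * k) : ℕ) : R) * ∏ i, X i ^ m i
        else 0 := by
    intro m hm
    rw [Finset.mem_piAntidiag] at hm
    rw [W_eval n k (by omega) m hm.1]
    split_ifs
    · push_cast; ring
    · simp
  rw [Finset.sum_congr rfl step3]
  rw [← Finset.sum_filter]
  -- Step 4: bijection with powersetCard
  have step4 : ∑ m ∈ (piAntidiag (Finset.univ : Finset (Fin n)) (2 * k)).filter
        (fun m => ∀ i, m i ≤ 1),
        (Nat.multinomial Finset.univ m : R) * ((4 ^ k * (n - 2 * k) : ℕ) : R) * ∏ i, X i ^ m i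
      = ∑ S ∈ Finset.powersetCard (2 * k) (Finset.univ : Finset (Fin n)),
          ((2 * k).factorial : R) * ((4 ^ k * (n - 2 * k) : ℕ) : R) * ∏ i ∈ S, X i := by
    refine Finset.sum_nbij' (fun m => Finset.univ.filter (fun i => m i = 1))
      (fun S => fun i => if i ∈ S then 1 else 0) ?_ ?_ ?_ ?_ ?_
    · intro m hm
      rw [Finset.mem_filter, Finset.mem_piAntidiag] at hm
      obtain ⟨⟨hsum, -⟩, hsq⟩ := hm
      rw [Finset.mem_powersetCard]
      refine ⟨Finset.filter_subset _ _, ?_⟩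
      have : ∀ i : Fin n, m i = if m i = 1 then 1 else 0 := fun i => by
        have := hsq i
        by_cases h : m i = 1 <;> simp [h]; omega
      rw [← hsum, Finset.sum_congr rfl fun i _ => this i, Finset.sum_boole]
      simp
    · intro S hS
      rw [Finset.mem_powersetCard] at hS
      rw [Finset.mem_filter, Finset.mem_piAntidiag]
      refine ⟨⟨?_, fun i _ => Finset.mem_univ i⟩, fun i => by dsimp only; split <;> omega⟩
      rw [Finset.sum_boole]
      simp [hS.2]
    · intro m hm
      rw [Finset.mem_filter] at hm
      funext i
      by_cases h : m i = 1
      · simp [h]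
      · have := hm.2 i
        have h0 : m i = 0 := by omega
        simp [h, h0]
    · intro S hS
      ext i
      simp
    · intro m hm
      rw [Finset.mem_filter, Finset.mem_piAntidiag] at hm
      obtain ⟨⟨hsum, -⟩, hsq⟩ := hm
      have hmult : Nat.multinomial Finset.univ m = (2 * k).factorial := by
        have hprod : ∏ i, (m i).factorial = 1 := by
          refine Finset.prod_eq_one fun i _ => ?_
          have := hsq i
          interval_cases h : m i <;> simp
        have := Nat.multinomial_spec Finset.univ m
        rw [hprod, one_mul, hsum] at this
        exact this
      have hmono : ∏ i, X i ^ m i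
          = ∏ i ∈ Finset.univ.filter (fun i => m i = 1), (X i : R) := by
        rw [← Finset.prod_filter_mul_prod_filter_not Finset.univ (fun i => m i = 1)
          (fun i => (X i : R) ^ m i)]
        have e1 : ∏ i ∈ Finset.univ.filter (fun i => m i = 1), (X i : R) ^ m i
            = ∏ i ∈ Finset.univ.filter (fun i => m i = 1), (X i : R) := by
          refine Finset.prod_congr rfl fun i hi => ?_
          rw [Finset.mem_filter] at hi
          rw [hi.2, pow_one]
        have e2 : ∏ i ∈ Finset.univ.filter (fun i => ¬ m i = 1), (X i : R) ^ m i = 1 := by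
          refine Finset.prod_eq_one fun i hi => ?_
          rw [Finset.mem_filter] at hi
          have := hsq i
          have h0 : m i = 0 := by omega
          rw [h0, pow_zero]
        rw [e1, e2, mul_one]
      rw [hmult, hmono]
  rw [step4]
  -- Step 5: identify with esymm
  rw [esymm, Finset.mul_sum]
  refine Finset.sum_congr rfl fun S _ => ?_
  have h4 : (2 : R) ^ (2 * k) = 4 ^ k := by
    rw [pow_mul]; norm_num
  push_cast
  rw [h4]
  ring
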